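/- Let (V, w, m) be a finite connected weighted graph and φ : ℝ → ℝ be odd, increasing, and convex on [0,∞). Let x ~ y, let C > 0, and let f : V → ℝ satisfy |f(u) − f(v)| ≤ C·d₀(u,v) for all u, v ∈ V and f(y) − f(x) = C. Let π : V × V → [0,∞) vanish outside B₁(x) × B₁(y), satisfy the marginal conditions Σ_{x′∈B₁(x)} π(x′,y′) = w(y,y′)/m(y) for every y′ ~ y and Σ_{y′∈B₁(y)} π(x′,y′) = w(x,x′)/m(x) for every x′ ~ x, and satisfy π(x′,y′) = 0 whenever x′ = y′. Then Δ_φ f(x) − Δ_φ f(y) ≥ φ(C) · Σ_{x′,y′∈V} π(x′,y′)·(1 − d₀(x′,y′)). -/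

import Mathlib

theorem stmt17 {V : Type*} [Fintype V] [DecidableEq V]
    (w : V → V → ℝ) (hsymm : ∀ a b, w a b = w b a) (hloop : ∀ a, w a a = 0)
    (hnonneg : ∀ a b, 0 ≤ w a b)
    (m : V → ℝ) (hm : ∀ a, 0 < m a)
    (G : SimpleGraph V) (hGadj : ∀ a b, G.Adj a b ↔ a ≠ b ∧ 0 < w a b)
    (hconn : G.Connected)
    (d₀ : V → V → ℕ) (hd₀ : ∀ a b, d₀ a b = G.dist a b)
    (φ : ℝ → ℝ) (hodd : ∀ t, φ (-t) = -φ t) (hmono : Monotone φ)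
    (hconv : ConvexOn ℝ (Set.Ici 0) φ)
    (Δφ : (V → ℝ) → (V → ℝ))
    (hΔφ : ∀ (f : V → ℝ) (v : V), Δφ f v = ∑ u : V, w v u / m v * φ (f u - f v))
    (x y : V) (hxy : G.Adj x y)
    (C : ℝ) (hC : 0 < C)
    (f : V → ℝ) (hLip : ∀ u v, |f u - f v| ≤ C * (d₀ u v : ℝ))
    (hfC : f y - f x = C)
    (π : V → V → ℝ) (hπ : ∀ a b, 0 ≤ π a b)
    (hsupp : ∀ a b, π a b ≠ 0 → d₀ x a ≤ 1 ∧ d₀ y b ≤ 1)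
    (hmarg1 : ∀ y' : V, G.Adj y y' → ∑ a : V, π a y' = w y y' / m y)
    (hmarg2 : ∀ x' : V, G.Adj x x' → ∑ b : V, π x' b = w x x' / m x)
    (hno3 : ∀ a : V, π a a = 0) :
    φ C * ∑ a : V, ∑ b : V, π a b * (1 - (d₀ a b : ℝ)) ≤ Δφ f x - Δφ f y := by
  have φ0 : φ 0 = 0 := by have := hodd 0; simp at this; linarith
  have hφC : 0 ≤ φ C := by rw [← φ0]; exact hmono hC.le
  -- superadditivity of φ on [0,∞)
  have hsuper : ∀ u v : ℝ, 0 ≤ u → 0 ≤ v → φ u + φ v ≤ φ (u + v) := by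
    intro u v hu hv
    rcases eq_or_lt_of_le hu with h | hu'
    · simp [← h, φ0]
    rcases eq_or_lt_of_le hv with h | hv'
    · simp [← h, φ0]
    have hs : 0 < u + v := by linarith
    have h1 := hconv.2 (Set.mem_Ici.mpr (le_of_lt hs)) (Set.mem_Ici.mpr le_rfl)
      (le_of_lt (div_pos hu' hs)) (le_of_lt (div_pos hv' hs)) (by rw [← add_div, div_self hs.ne'])
    have h2 := hconv.2 (Set.mem_Ici.mpr (le_of_lt hs)) (Set.mem_Ici.mpr le_rfl)
      (le_of_lt (div_pos hv' hs)) (le_of_lt (div_pos hu' hs)) (by rw [← add_div, add_comm v u, div_self hs.ne'])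
    have e1 : (u / (u + v)) • (u + v) + (v / (u + v)) • (0:ℝ) = u := by
      rw [smul_eq_mul, smul_eq_mul, mul_zero, add_zero, div_mul_cancel₀ u hs.ne']
    have e2 : (v / (u + v)) • (u + v) + (u / (u + v)) • (0:ℝ) = v := by
      rw [smul_eq_mul, smul_eq_mul, mul_zero, add_zero, div_mul_cancel₀ v hs.ne']
    rw [e1] at h1; rw [e2] at h2
    simp only [smul_eq_mul, φ0, mul_zero, add_zero] at h1 h2
    have : u / (u + v) * φ (u + v) + v / (u + v) * φ (u + v) = φ (u + v) := by
      field_simp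
    linarith
  -- key pointwise inequality
  have key : ∀ a b : V, π a b ≠ 0 →
      φ C * (1 - (G.dist a b : ℝ)) ≤ φ (f a - f x) - φ (f b - f y) := by
    intro a b hab0
    have hab : a ≠ b := fun h => hab0 (h ▸ hno3 a)
    obtain ⟨hdxa, hdyb⟩ := hsupp a b hab0
    rw [hd₀] at hdxa; rw [hd₀] at hdyb
    set s := f a - f x with hs
    set t := f b - f y with ht
    have hsC : |s| ≤ C := by
      have := hLip a x
      rw [hd₀, SimpleGraph.dist_comm] at this
      calc |s| ≤ C * (G.dist x a : ℝ) := this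
        _ ≤ C * 1 := by
            apply mul_le_mul_of_nonneg_left _ hC.le
            exact_mod_cast hdxa
        _ = C := mul_one C
    have htC : |t| ≤ C := by
      have := hLip b y
      rw [hd₀, SimpleGraph.dist_comm] at this
      calc |t| ≤ C * (G.dist y b : ℝ) := this
        _ ≤ C * 1 := by
            apply mul_le_mul_of_nonneg_left _ hC.le
            exact_mod_cast hdyb
        _ = C := mul_one C
    have hdpos : 1 ≤ G.dist a b := hconn.pos_dist_of_ne hab
    have hba : f b - f a ≤ C * (G.dist a b : ℝ) := by
      have := hLip b a
      rw [hd₀, SimpleGraph.dist_comm] at this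
      exact (abs_le.mp this).2 |>.trans_eq rfl |>.trans le_rfl
    have hts : t - s ≤ C * ((G.dist a b : ℝ) - 1) := by
      have : t - s = (f b - f a) - C := by rw [hs, ht]; linarith
      rw [this]; linarith [hba]
    have hsφ : -φ C ≤ φ s := by
      have : -C ≤ s := (abs_le.mp hsC).1
      calc -φ C = φ (-C) := (hodd C).symm
        _ ≤ φ s := hmono this
    have htφ : φ t ≤ φ C := hmono (abs_le.mp htC).2
    set n := G.dist a b with hn
    rcases Nat.lt_or_ge n 2 with h2 | h2
    · -- n = 1
      have hn1 : n = 1 := le_antisymm (by omega) hdpos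
      rw [hn1]
      simp only [Nat.cast_one, sub_self, mul_zero]
      have : t ≤ s := by
        have := hts; rw [hn1] at this; simp at this; linarith
      linarith [hmono this]
    rcases Nat.lt_or_ge n 3 with h3 | h3
    · -- n = 2
      have hn2 : n = 2 := by omega
      rw [hn2]
      have htsC : t ≤ s + C := by
        have := hts; rw [hn2] at this; push_cast at this; linarith
      have hkey : φ t ≤ φ s + φ C := by
        rcases le_or_gt 0 s with hs0 | hs0
        · have : 0 ≤ φ s := by rw [← φ0]; exact hmono hs0
          linarith
        · have h1 : 0 ≤ s + C := by linarith [(abs_le.mp hsC).1]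
          have h2 : 0 ≤ -s := by linarith
          have := hsuper (s + C) (-s) h1 h2
          have he : s + C + -s = C := by ring
          rw [he] at this
          have : φ (s + C) ≤ φ C + φ s := by
            have hφns : φ (-s) = -φ s := hodd s
            linarith
          linarith [hmono htsC]
      push_cast; linarith
    · -- n ≥ 3
      have : (3:ℝ) ≤ (n:ℝ) := by exact_mod_cast h3
      have h1 : φ C * (1 - (n:ℝ)) ≤ -2 * φ C := by nlinarith
      linarith
  -- rewrite Δφ f x
  have hπsupp1 : ∀ a, ¬ G.Adj x a → a ≠ x → ∀ b, π a b = 0 := by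
    intro a hadj hax b
    by_contra h
    have hd := (hsupp a b h).1
    rw [hd₀] at hd
    have hpos : 1 ≤ G.dist x a := hconn.pos_dist_of_ne (Ne.symm hax)
    have : G.dist x a = 1 := le_antisymm hd hpos
    exact hadj (SimpleGraph.dist_eq_one_iff_adj.mp this)
  have hπsupp2 : ∀ b, ¬ G.Adj y b → b ≠ y → ∀ a, π a b = 0 := by
    intro b hadj hby a
    by_contra h
    have hd := (hsupp a b h).2
    rw [hd₀] at hd
    have hpos : 1 ≤ G.dist y b := hconn.pos_dist_of_ne (Ne.symm hby)
    have : G.dist y b = 1 := le_antisymm hd hpos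
    exact hadj (SimpleGraph.dist_eq_one_iff_adj.mp this)
  have hwz : ∀ a b : V, ¬ G.Adj a b → a ≠ b → w a b = 0 := by
    intro a b hadj hne
    by_contra h
    exact hadj ((hGadj a b).mpr ⟨hne, lt_of_le_of_ne (hnonneg a b) (Ne.symm h)⟩)
  have hx : Δφ f x = ∑ a : V, ∑ b : V, π a b * φ (f a - f x) := by
    rw [hΔφ]
    apply Finset.sum_congr rfl
    intro a _
    rw [← Finset.sum_mul]
    by_cases hadj : G.Adj x a
    · rw [hmarg2 a hadj]
    · by_cases hax : a = x
      · subst hax; simp [hloop, φ0]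
      · rw [hwz x a hadj (Ne.symm hax)]
        have : ∑ b : V, π a b = 0 :=
          Finset.sum_eq_zero fun b _ => hπsupp1 a hadj hax b
        rw [this, zero_div]
  have hy : Δφ f y = ∑ a : V, ∑ b : V, π a b * φ (f b - f y) := by
    rw [hΔφ, Finset.sum_comm]
    apply Finset.sum_congr rfl
    intro b _
    rw [← Finset.sum_mul]
    by_cases hadj : G.Adj y b
    · rw [hmarg1 b hadj]
    · by_cases hby : b = y
      · subst hby; simp [hloop, φ0]
      · rw [hwz y b hadj (Ne.symm hby)]
        have : ∑ a : V, π a b = 0 :=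
          Finset.sum_eq_zero fun a _ => hπsupp2 b hadj hby a
        rw [this, zero_div]
  rw [hx, hy, ← Finset.sum_sub_distrib, Finset.mul_sum]
  apply Finset.sum_le_sum
  intro a _
  rw [← Finset.sum_sub_distrib, Finset.mul_sum]
  apply Finset.sum_le_sum
  intro b _
  by_cases h : π a b = 0
  · simp [h]
  · have hk := key a b h
    rw [hd₀]
    have hp := hπ a b
    calc φ C * (π a b * (1 - (G.dist a b : ℝ)))
        = π a b * (φ C * (1 - (G.dist a b : ℝ))) := by ring
      _ ≤ π a b * (φ (f a - f x) - φ (f b - f y)) := by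
          exact mul_le_mul_of_nonneg_left hk hp
      _ = π a b * φ (f a - f x) - π a b * φ (f b - f y) := by ring
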